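/- The number of order-decreasing, order-reversing partial isometries of {1,...,n} with image of size 2 equals (n+1)(n−1)(2n−3)/24 if n is odd, and n(n−2)(2n+1)/24 if n is even. -/

import Mathlib

/-- Partial maps on ℕ; `none` means undefined. -/
def PDom (α : ℕ → Option ℕ) : Set ℕ := {x | α x ≠ none}
def PImg (α : ℕ → Option ℕ) : Set ℕ := {y | ∃ x, α x = some y}
def PFix (α : ℕ → Option ℕ) : Set ℕ := {x | α x = some x}

/-- `α` is a partial injective isometry of the chain {1,…,n}. -/
def PIso (n : ℕ) (α : ℕ → Option ℕ) : Prop :=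
  (∀ x, α x ≠ none → x ∈ Set.Icc 1 n) ∧
  (∀ x y, α x = some y → y ∈ Set.Icc 1 n) ∧
  (∀ x y a, α x = some a → α y = some a → x = y) ∧
  (∀ x y a b, α x = some a → α y = some b →
    ((a : ℤ) - (b : ℤ)).natAbs = ((x : ℤ) - (y : ℤ)).natAbs)

/-- order-decreasing -/
def PDecr (α : ℕ → Option ℕ) : Prop := ∀ x a, α x = some a → a ≤ x

/-- order-preserving -/
def POPres (α : ℕ → Option ℕ) : Prop :=
  ∀ x y a b, α x = some a → α y = some b → x ≤ y → a ≤ b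

/-- order-reversing -/
def PORev (α : ℕ → Option ℕ) : Prop :=
  ∀ x y a b, α x = some a → α y = some b → x ≤ y → b ≤ a



def fmap (x y b : ℕ) : ℕ → Option ℕ :=
  fun t => if t = x then some (b + (y - x)) else if t = y then some b else none

def Fset (n : ℕ) : Finset (ℕ × ℕ × ℕ) :=
  (Finset.range (n+1) ×ˢ Finset.range (n+1) ×ˢ Finset.range (n+1)).filter
    (fun p => p.1 < p.2.1 ∧ 1 ≤ p.2.2 ∧ p.2.2 + p.2.1 ≤ 2 * p.1)

def Hset (n : ℕ) : Finset (ℕ × ℕ) :=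
  (Finset.range (n+1) ×ˢ Finset.range (n+1)).filter
    (fun q => 1 ≤ q.2 ∧ q.2 + (n+1) ≤ 2 * q.1)

def tt (n : ℕ) : ℕ := ∑ x ∈ Finset.range (n+1), (2*x - (n+1))

lemma mem_Fset (n : ℕ) (p : ℕ × ℕ × ℕ) :
    p ∈ Fset n ↔ p.1 < p.2.1 ∧ p.2.1 ≤ n ∧ 1 ≤ p.2.2 ∧ p.2.2 + p.2.1 ≤ 2 * p.1 := by
  simp only [Fset, Finset.mem_filter, Finset.mem_product, Finset.mem_range]
  omega

lemma mem_Hset (n : ℕ) (q : ℕ × ℕ) :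
    q ∈ Hset n ↔ q.1 ≤ n ∧ 1 ≤ q.2 ∧ q.2 + (n+1) ≤ 2 * q.1 := by
  simp only [Hset, Finset.mem_filter, Finset.mem_product, Finset.mem_range]
  omega

lemma tt_succ_succ (n : ℕ) : tt (n+2) = tt n + (n+1) := by
  have h1 : tt (n+2) = ∑ x ∈ Finset.range (n+2), (2*(x+1) - (n+3)) + (2*0 - (n+3)) := by
    simpa [tt] using Finset.sum_range_succ' (fun x => 2*x - (n+3)) (n+2)
  have h2 : ∑ x ∈ Finset.range (n+2), (2*(x+1) - (n+3))
      = ∑ x ∈ Finset.range (n+1), (2*(x+1) - (n+3)) + (2*(n+2) - (n+3)) :=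
    Finset.sum_range_succ _ _
  have h3 : ∑ x ∈ Finset.range (n+1), (2*(x+1) - (n+3))
      = ∑ x ∈ Finset.range (n+1), (2*x - (n+1)) := by
    apply Finset.sum_congr rfl
    intro x _; omega
  rw [h1, h2, h3]
  simp only [tt]; omega

lemma tt_even (k : ℕ) : tt (2*k) = k*k := by
  induction k with
  | zero => simp [tt]
  | succ m ih =>
      have : 2*(m+1) = 2*m + 2 := by ring
      rw [this, tt_succ_succ, ih]; ring

lemma tt_odd (k : ℕ) : tt (2*k+1) = k*(k+1) := by
  induction k with
  | zero => simp [tt, Finset.sum_range_succ]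
  | succ m ih =>
      have : 2*(m+1)+1 = (2*m+1) + 2 := by ring
      rw [this, tt_succ_succ, ih]; ring

lemma Hset_card (n : ℕ) : (Hset n).card = tt n := by
  rw [tt, Finset.card_eq_sum_card_fiberwise (f := Prod.fst) (t := Finset.range (n+1))
    (fun q hq => by rw [Finset.mem_coe, mem_Hset] at hq; simp [Finset.mem_range]; omega)]
  apply Finset.sum_congr rfl
  intro x hx
  simp only [Finset.mem_range] at hx
  have : (Hset n).filter (fun q => q.1 = x)
      = (Finset.Icc 1 (2*x - (n+1))).image (fun b => (x, b)) := by
    ext q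
    simp only [Finset.mem_filter, mem_Hset, Finset.mem_image, Finset.mem_Icc]
    constructor
    · rintro ⟨⟨h1, h2, h3⟩, rfl⟩
      exact ⟨q.2, by omega, rfl⟩
    · rintro ⟨b, hb, rfl⟩
      refine ⟨⟨by omega, by omega, by omega⟩, rfl⟩
  rw [this, Finset.card_image_of_injective _ (fun a b h => by simpa using h)]
  simp [Nat.card_Icc]

lemma Fset_card_succ (n : ℕ) : (Fset (n+1)).card = (Fset n).card + tt n := by
  have key := Finset.card_filter_add_card_filter_not
    (s := Fset (n+1)) (p := fun p => p.2.1 ≤ n)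
  have h1 : (Fset (n+1)).filter (fun p => p.2.1 ≤ n) = Fset n := by
    ext p
    simp only [Finset.mem_filter, mem_Fset]
    omega
  have h2 : ((Fset (n+1)).filter (fun p => ¬ p.2.1 ≤ n)).card = (Hset n).card := by
    apply Finset.card_bij (fun p _ => (p.1, p.2.2))
    · rintro ⟨x, y, b⟩ hp
      simp only [Finset.mem_filter, mem_Fset] at hp
      rw [mem_Hset]
      simp only at hp ⊢
      omega
    · rintro ⟨x, y, b⟩ hp ⟨x', y', b'⟩ hq h
      simp only [Finset.mem_filter, mem_Fset] at hp hq
      simp only [Prod.mk.injEq] at h ⊢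
      refine ⟨h.1, by omega, h.2⟩
    · rintro ⟨x, b⟩ hq
      rw [mem_Hset] at hq
      refine ⟨(x, n+1, b), ?_, rfl⟩
      simp only [Finset.mem_filter, mem_Fset]
      omega
  rw [← key, h1, h2, Hset_card]

lemma Fset_card_count (k : ℕ) :
    (Fset (2*k)).card * 6 = k*(k-1)*(4*k+1) ∧ (Fset (2*k+1)).card * 6 = k*(k+1)*(4*k-1) := by
  induction k with
  | zero => exact ⟨by decide, by decide⟩
  | succ m ih =>
      obtain ⟨ih1, ih2⟩ := ih
      have c1 : (Fset (2*(m+1))).card = (Fset (2*m+1)).card + tt (2*m+1) := by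
        have e1 : 2*(m+1) = (2*m+1) + 1 := by ring
        rw [e1]; exact Fset_card_succ _
      have c2 : (Fset (2*(m+1)+1)).card = (Fset (2*(m+1))).card + tt (2*(m+1)) :=
        Fset_card_succ _
      constructor
      · rw [Nat.add_sub_cancel, c1, tt_odd, Nat.add_mul]
        rcases m with _ | j
        · omega
        · have e : 4*(j+1) - 1 = 4*j+3 := by omega
          rw [e] at ih2
          rw [ih2]; ring
      · have e : 4*(m+1) - 1 = 4*m+3 := by omega
        rw [e, c2, c1, tt_odd, tt_even, Nat.add_mul, Nat.add_mul]
        rcases m with _ | j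
        · omega
        · have e2 : 4*(j+1) - 1 = 4*j+3 := by omega
          rw [e2] at ih2
          rw [ih2]; ring

lemma fmap_at_x (x y b : ℕ) : fmap x y b x = some (b + (y - x)) := by
  simp [fmap]

lemma fmap_at_y (x y b : ℕ) (h : y ≠ x) : fmap x y b y = some b := by
  simp [fmap, h]

lemma fmap_at_other (x y b t : ℕ) (h1 : t ≠ x) (h2 : t ≠ y) : fmap x y b t = none := by
  simp [fmap, h1, h2]

lemma set_eq (n : ℕ) :
    {α : ℕ → Option ℕ | PIso n α ∧ PDecr α ∧ PORev α ∧ (PImg α).ncard = 2}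
      = (fun p : ℕ × ℕ × ℕ => fmap p.1 p.2.1 p.2.2) '' ↑(Fset n) := by
  ext α
  simp only [Set.mem_setOf_eq, Set.mem_image, Finset.mem_coe]
  constructor
  · rintro ⟨⟨hdom, himg, hinj, hiso⟩, hdec, hrev, hcard⟩
    obtain ⟨u, v, huv, hset⟩ := Set.ncard_eq_two.mp hcard
    obtain ⟨a, b, hba, hset⟩ : ∃ a b, b < a ∧ PImg α = {a, b} := by
      rcases Nat.lt_or_ge u v with h | h
      · exact ⟨v, u, h, by rw [hset, Set.pair_comm]⟩
      · exact ⟨u, v, by omega, hset⟩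
    have ha : a ∈ PImg α := by rw [hset]; left; rfl
    have hb : b ∈ PImg α := by rw [hset]; right; rfl
    obtain ⟨x, hx⟩ := ha
    obtain ⟨y, hy⟩ := hb
    have hxy : x < y := by
      rcases Nat.lt_trichotomy x y with h|h|h
      · exact h
      · rw [← h, hx, Option.some.injEq] at hy; omega
      · exact absurd (hrev y x b a hy hx (le_of_lt h)) (by omega)
    have hiso' := hiso x y a b hx hy
    have h1 := himg y b hy
    have h2 := hdom y (by rw [hy]; simp)
    have h3 := hdec x a hx
    rw [Set.mem_Icc] at h1 h2
    refine ⟨(x, y, b), ?_, ?_⟩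
    · rw [mem_Fset]
      exact ⟨hxy, show y ≤ n by omega, show 1 ≤ b by omega, show b + y ≤ 2*x by omega⟩
    · funext t
      show fmap x y b t = α t
      rcases ht : α t with _ | c
      · refine fmap_at_other x y b t (fun e => ?_) (fun e => ?_)
        · rw [e, hx] at ht; exact nomatch ht
        · rw [e, hy] at ht; exact nomatch ht
      · have hc : c ∈ PImg α := ⟨t, ht⟩
        rw [hset] at hc
        simp only [Set.mem_insert_iff, Set.mem_singleton_iff] at hc
        rcases hc with rfl | rfl
        · have he : t = x := hinj t x c ht hx
          subst he
          rw [fmap_at_x, Option.some.injEq]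
          omega
        · have he : t = y := hinj t y c ht hy
          subst he
          exact fmap_at_y _ _ _ (by omega)
  · rintro ⟨⟨x, y, b⟩, hp, rfl⟩
    rw [mem_Fset] at hp
    simp only at hp
    obtain ⟨hxy, hyn, hb, hsum⟩ := hp
    refine ⟨⟨?_, ?_, ?_, ?_⟩, ?_, ?_, ?_⟩
    · intro t ht
      simp only [fmap] at ht
      split_ifs at ht with e1 e2
      · exact Set.mem_Icc.mpr (by omega)
      · exact Set.mem_Icc.mpr (by omega)
      · exact absurd rfl ht
    · intro t c h
      simp only [fmap] at h
      split_ifs at h with e1 e2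
      · rw [Option.some.injEq] at h; exact Set.mem_Icc.mpr (by omega)
      · rw [Option.some.injEq] at h; exact Set.mem_Icc.mpr (by omega)
    · intro s t c hs ht
      simp only [fmap] at hs ht
      split_ifs at hs ht <;> simp_all <;> omega
    · intro s t c d hs ht
      simp only [fmap] at hs ht
      split_ifs at hs ht <;> simp_all <;> omega
    · intro t c h
      simp only [fmap] at h
      split_ifs at h <;> simp_all <;> omega
    · intro s t c d hs ht hst
      simp only [fmap] at hs ht
      split_ifs at hs ht <;> simp_all <;> omega
    · have : PImg (fmap x y b) = {b + (y - x), b} := by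
        ext c
        simp only [PImg, Set.mem_setOf_eq, Set.mem_insert_iff, Set.mem_singleton_iff]
        constructor
        · rintro ⟨t, ht⟩
          simp only [fmap] at ht
          split_ifs at ht with e1 e2
          · exact Or.inl (Option.some.inj ht).symm
          · exact Or.inr (Option.some.inj ht).symm
        · rintro (rfl | rfl)
          · exact ⟨x, by simp [fmap]⟩
          · exact ⟨y, fmap_at_y _ _ _ (by omega)⟩
      rw [this, Set.ncard_pair (by omega)]

lemma fmap_injOn (n : ℕ) :
    Set.InjOn (fun p : ℕ × ℕ × ℕ => fmap p.1 p.2.1 p.2.2) (Fset n) := by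
  rintro ⟨x, y, b⟩ hp ⟨x', y', b'⟩ hq h
  rw [Finset.mem_coe, mem_Fset] at hp hq
  obtain ⟨hxy, hyn, hb, hs⟩ := hp
  obtain ⟨hxy', hyn', hb', hs'⟩ := hq
  simp only at hxy hyn hb hs hxy' hyn' hb' hs'
  have h' : fmap x y b = fmap x' y' b' := h
  have hxx : x = x' := by
    by_contra hne
    have hx1 := congrFun h' x
    have hx2 := congrFun h' x'
    rw [fmap_at_x] at hx1
    rw [fmap_at_x x' y' b'] at hx2
    have e1 : x = y' := by
      by_contra he
      rw [fmap_at_other x' y' b' x hne he] at hx1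
      exact nomatch hx1
    have e2 : x' = y := by
      by_contra he
      rw [fmap_at_other x y b x' (Ne.symm hne) he] at hx2
      exact nomatch hx2
    omega
  subst hxx
  have hyy : y = y' := by
    have hy1 := congrFun h' y
    rw [fmap_at_y x y b (by omega)] at hy1
    by_contra he
    rw [fmap_at_other x y' b' y (by omega) he] at hy1
    exact nomatch hy1
  subst hyy
  have hbb : b = b' := by
    have hy1 := congrFun h' y
    rw [fmap_at_y x y b (by omega), fmap_at_y x y b' (by omega)] at hy1
    exact Option.some.inj hy1
  rw [hbb]

lemma count_eq (n : ℕ) :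
    Nat.card {α : ℕ → Option ℕ //
        PIso n α ∧ PDecr α ∧ PORev α ∧ (PImg α).ncard = 2} = (Fset n).card := by
  rw [← Set.ncard_coe_finset, ← Set.ncard_image_of_injOn (fmap_injOn n), ← set_eq n]
  exact Nat.card_coe_set_eq _

/-- The number of order-decreasing, order-reversing partial isometries of {1,…,n}
with image of size 2 is (n+1)(n−1)(2n−3)/24 for n odd and n(n−2)(2n+1)/24 for n even. -/
theorem ddpstar_height_two_count (n : ℕ) :
    (Odd n → Nat.card {α : ℕ → Option ℕ //
        PIso n α ∧ PDecr α ∧ PORev α ∧ (PImg α).ncard = 2} =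
      (n + 1) * (n - 1) * (2 * n - 3) / 24) ∧
    (Even n → Nat.card {α : ℕ → Option ℕ //
        PIso n α ∧ PDecr α ∧ PORev α ∧ (PImg α).ncard = 2} =
      n * (n - 2) * (2 * n + 1) / 24) := by
  constructor
  · intro hodd
    obtain ⟨m, rfl⟩ := hodd
    rw [count_eq]
    have h := (Fset_card_count m).2
    have e : (2*m+1+1) * (2*m+1-1) * (2*(2*m+1)-3) = (Fset (2*m+1)).card * 24 := by
      have e1 : 2*m+1-1 = 2*m := by omega
      have e2 : 2*(2*m+1)-3 = 4*m-1 := by omega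
      rw [e1, e2]
      rcases m with _ | j
      · omega
      · have e3 : 4*(j+1)-1 = 4*j+3 := by omega
        rw [e3] at h ⊢
        rw [show (Fset (2*(j+1)+1)).card * 24 = ((Fset (2*(j+1)+1)).card * 6) * 4 from by ring,
          h]
        ring
    rw [e]
    omega
  · intro heven
    obtain ⟨m, rfl⟩ := heven
    rw [show m + m = 2*m from by ring, count_eq]
    have h := (Fset_card_count m).1
    have e : (2*m) * (2*m-2) * (2*(2*m)+1) = (Fset (2*m)).card * 24 := by
      rcases m with _ | j
      · omega
      · have e1 : 2*(j+1)-2 = 2*j := by omega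
        have e2 : (j+1)-1 = j := by omega
        rw [e1]
        rw [e2] at h
        rw [show (Fset (2*(j+1))).card * 24 = ((Fset (2*(j+1))).card * 6) * 4 from by ring, h]
        ring
    rw [e]
    omega
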